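/- Let V be a d×n real matrix with columns v_1,…,v_n, let s be an integer with 1 ≤ s ≤ d, and let x ∈ [0,1]ⁿ with ∑_{i=1}^n x_i = s. Let λ₁ ≥ ⋯ ≥ λ_d ≥ 0 be the eigenvalues of X = ∑_{i=1}^n x_i v_i v_iᵀ, assume λ_s > 0, and let k = k(λ,s). Then ∑_{i=1}^k 1/λ_i + (s−k)²/(∑_{i=k+1}^d λ_i) ≥ E_{s−1}(λ)/E_s(λ); that is, Φ_s(X) ≥ E_{s−1}(λ)/E_s(λ). -/

import Mathlib

open Matrix Finset

noncomputable section

/-- `lam` lists the eigenvalues (with multiplicity) of the real symmetric matrix `X`,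
via an orthogonal spectral decomposition. -/
def IsSpectralDecomp {m : Type*} [Fintype m] [DecidableEq m]
    (X : Matrix m m ℝ) (lam : m → ℝ) : Prop :=
  ∃ Q : Matrix m m ℝ, Q * Qᵀ = 1 ∧ X = Q * Matrix.diagonal lam * Qᵀ

/-- Principal submatrix `C_{S,S}`. -/
def subSub {n : ℕ} (C : Matrix (Fin n) (Fin n) ℝ) (S : Finset (Fin n)) :
    Matrix {i // i ∈ S} {i // i ∈ S} ℝ :=
  Matrix.of fun a b => C a.1 b.1

/-- The value `λ_{i+1}` (1-based), i.e. the coordinate of `lam` of 0-based index `i`;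
`0` when out of range. -/
def extVal {d : ℕ} (lam : Fin d → ℝ) : ℕ → ℝ :=
  fun i => if h : i < d then lam ⟨i, h⟩ else 0

/-- `∑_{i=k+1}^d λ_i` (1-based), i.e. the sum of the coordinates of 0-based index `≥ k`. -/
def tailSum {d : ℕ} (lam : Fin d → ℝ) (k : ℕ) : ℝ :=
  ∑ i ∈ Finset.univ.filter (fun i : Fin d => k ≤ (i : ℕ)), lam i

/-- `k = k(λ, s)`: an integer `0 ≤ k < s` with
`λ_k > (1/(s-k)) ∑_{i=k+1}^d λ_i ≥ λ_{k+1}`, with the convention `λ₀ = +∞`. -/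
def IsKIndex {d : ℕ} (lam : Fin d → ℝ) (s k : ℕ) : Prop :=
  k < s ∧ extVal lam k ≤ tailSum lam k / ((s : ℝ) - k) ∧
    (k = 0 ∨ tailSum lam k / ((s : ℝ) - k) < extVal lam (k - 1))

/-- `P` is the Moore–Penrose pseudoinverse of `X`. -/
def IsPseudoInv {d : ℕ} (X P : Matrix (Fin d) (Fin d) ℝ) : Prop :=
  X * P * X = X ∧ P * X * P = P ∧ (X * P)ᵀ = X * P ∧ (P * X)ᵀ = P * X


/-- Double counting: pairs (T, i) with |T| = m, i ∈ S \ T correspond (m+1)-to-... -/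
private lemma count_aux {ι : Type*} [DecidableEq ι] (f : ι → ℝ) (S : Finset ι) (m : ℕ) :
    ∑ T ∈ S.powersetCard m, (∑ i ∈ S \ T, f i) * ∏ j ∈ T, f j
      = ((m : ℝ) + 1) * ∑ U ∈ S.powersetCard (m + 1), ∏ j ∈ U, f j := by
  have hR : ∀ U ∈ S.powersetCard (m + 1), ((m : ℝ) + 1) * ∏ j ∈ U, f j
      = ∑ i ∈ U, f i * ∏ j ∈ U.erase i, f j := by
    intro U hU
    rw [Finset.mem_powersetCard] at hU
    rw [Finset.sum_congr rfl (fun i hi => Finset.mul_prod_erase U f hi),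
      Finset.sum_const, hU.2, nsmul_eq_mul]
    push_cast
    ring
  rw [Finset.mul_sum, Finset.sum_congr rfl hR,
    Finset.sum_congr rfl (fun T _ => Finset.sum_mul (S \ T) f (∏ j ∈ T, f j)),
    Finset.sum_sigma', Finset.sum_sigma']
  refine Finset.sum_bij' (fun p _ => (⟨insert p.2 p.1, p.2⟩ : Σ _ : Finset ι, ι))
    (fun p _ => (⟨p.1.erase p.2, p.2⟩ : Σ _ : Finset ι, ι)) ?_ ?_ ?_ ?_ ?_
  · rintro ⟨T, i⟩ hp
    rw [Finset.mem_sigma, Finset.mem_powersetCard] at hp ⊢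
    obtain ⟨⟨hTS, hTc⟩, hi⟩ := hp
    rw [Finset.mem_sdiff] at hi
    exact ⟨⟨Finset.insert_subset hi.1 hTS, by rw [Finset.card_insert_of_notMem hi.2, hTc]⟩,
      Finset.mem_insert_self _ _⟩
  · rintro ⟨U, i⟩ hp
    rw [Finset.mem_sigma, Finset.mem_powersetCard] at hp ⊢
    obtain ⟨⟨hUS, hUc⟩, hi⟩ := hp
    refine ⟨⟨(Finset.erase_subset _ _).trans hUS, by rw [Finset.card_erase_of_mem hi, hUc]; rfl⟩, ?_⟩
    rw [Finset.mem_sdiff]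
    exact ⟨hUS hi, Finset.notMem_erase _ _⟩
  · rintro ⟨T, i⟩ hp
    rw [Finset.mem_sigma, Finset.mem_sdiff] at hp
    simp [Finset.erase_insert hp.2.2]
  · rintro ⟨U, i⟩ hp
    rw [Finset.mem_sigma] at hp
    simp [Finset.insert_erase hp.2]
  · rintro ⟨T, i⟩ hp
    rw [Finset.mem_sigma, Finset.mem_sdiff] at hp
    simp [Finset.erase_insert hp.2.2]

private lemma card_filter_lt_fin {d : ℕ} (m : ℕ) (h : m ≤ d) :
    ((Finset.univ : Finset (Fin d)).filter (fun i : Fin d => (i : ℕ) < m)).card = m := by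
  have he : (Finset.univ : Finset (Fin d)).filter (fun i : Fin d => (i : ℕ) < m)
      = Finset.image (Fin.castLE h) Finset.univ := by
    ext i
    simp only [Finset.mem_filter, Finset.mem_univ, true_and, Finset.mem_image]
    constructor
    · intro hi; exact ⟨⟨i, hi⟩, by simp⟩
    · rintro ⟨j, -, rfl⟩; exact j.2
  rw [he, Finset.card_image_of_injective _ (Fin.castLE_injective h), Finset.card_univ,
    Fintype.card_fin]

/-- For feasible `x` with `λ_s(X) > 0`,
`Φ_s(X) = ∑_{i≤k} 1/λᵢ + (s−k)²/∑_{i>k} λᵢ ≥ E_{s−1}(λ)/E_s(λ)`. -/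
theorem stmt_16 (d n s : ℕ) (hs1 : 1 ≤ s) (hsd : s ≤ d)
    (V : Matrix (Fin d) (Fin n) ℝ)
    (x : Fin n → ℝ) (hx0 : ∀ i, 0 ≤ x i) (hx1 : ∀ i, x i ≤ 1) (hxs : ∑ i, x i = s)
    (lam : Fin d → ℝ) (hsort : Antitone lam) (hnn : ∀ i, 0 ≤ lam i)
    (hdecomp : IsSpectralDecomp
      (∑ i, x i • vecMulVec (fun a => V a i) (fun a => V a i)) lam)
    (hlams : 0 < extVal lam (s - 1))
    (k : ℕ) (hk : IsKIndex lam s k) :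
    (∑ T ∈ (Finset.univ : Finset (Fin d)).powersetCard (s - 1), ∏ i ∈ T, lam i) /
        (∑ T ∈ (Finset.univ : Finset (Fin d)).powersetCard s, ∏ i ∈ T, lam i)
      ≤ (∑ i ∈ Finset.univ.filter (fun i : Fin d => (i : ℕ) < k), 1 / lam i)
        + ((s : ℝ) - k) ^ 2 / tailSum lam k := by
  classical
  obtain ⟨hks, hkval, -⟩ := hk
  have hkd : k < d := lt_of_lt_of_le hks hsd
  have hs1d : s - 1 < d := lt_of_lt_of_le (Nat.sub_lt hs1 Nat.one_pos) hsd
  set A : Finset (Fin d) := Finset.univ.filter (fun i : Fin d => (i : ℕ) < k) with hA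
  set B : Finset (Fin d) := Finset.univ.filter (fun i : Fin d => k ≤ (i : ℕ)) with hB
  set t : ℕ := s - k with ht
  have ht1 : 1 ≤ t := by omega
  set u : ℝ := (t : ℝ) with hu
  have hu1 : (1:ℝ) ≤ u := by rw [hu]; exact_mod_cast ht1
  have hu0 : (0:ℝ) < u := by linarith
  have hcast : (s : ℝ) - (k : ℝ) = u := by rw [hu, ht, Nat.cast_sub hks.le]
  set τ : ℝ := ∑ i ∈ B, lam i with hτdef
  have htail : tailSum lam k = τ := rfl
  set i₀ : Fin d := ⟨s-1, hs1d⟩ with hi₀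
  have hlam0 : 0 < lam i₀ := by simpa [extVal, hs1d, hi₀] using hlams
  have hprodnn : ∀ T : Finset (Fin d), 0 ≤ ∏ i ∈ T, lam i :=
    fun T => Finset.prod_nonneg fun i _ => hnn i
  have hi₀B : i₀ ∈ B := by
    rw [hB, Finset.mem_filter]
    refine ⟨Finset.mem_univ _, ?_⟩
    show k ≤ s - 1
    omega
  have hτpos : 0 < τ :=
    lt_of_lt_of_le hlam0 (Finset.single_le_sum (fun i _ => hnn i) hi₀B)
  have hApos : ∀ i ∈ A, 0 < lam i := by
    intro i hi
    rw [hA, Finset.mem_filter] at hi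
    refine lt_of_lt_of_le hlam0 (hsort ?_)
    rw [Fin.le_def]
    show (i : ℕ) ≤ s - 1
    omega
  have hBle : ∀ i ∈ B, lam i ≤ τ / u := by
    intro i hi
    rw [hB, Finset.mem_filter] at hi
    have h1 : lam i ≤ lam ⟨k, hkd⟩ := hsort (by rw [Fin.le_def]; exact hi.2)
    have h2 : extVal lam k = lam ⟨k, hkd⟩ := by simp [extVal, hkd]
    rw [htail, hcast] at hkval
    rw [h2] at hkval
    exact h1.trans hkval
  -- positivity of E_s
  have hT0 : Finset.univ.filter (fun i : Fin d => (i : ℕ) < s)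
      ∈ (Finset.univ : Finset (Fin d)).powersetCard s := by
    rw [Finset.mem_powersetCard]
    exact ⟨Finset.subset_univ _, card_filter_lt_fin s hsd⟩
  have hT0pos : 0 < ∏ i ∈ Finset.univ.filter (fun i : Fin d => (i : ℕ) < s), lam i := by
    apply Finset.prod_pos
    intro i hi
    rw [Finset.mem_filter] at hi
    refine lt_of_lt_of_le hlam0 (hsort ?_)
    rw [Fin.le_def]
    show (i : ℕ) ≤ s - 1
    omega
  have hEs : 0 < ∑ T ∈ (Finset.univ : Finset (Fin d)).powersetCard s, ∏ i ∈ T, lam i :=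
    lt_of_lt_of_le hT0pos (Finset.single_le_sum (fun T _ => hprodnn T) hT0)
  -- Step S1 : τ * e_{t-1}(B) ≤ u² e_t(B)
  have hS1 : τ * (∑ T ∈ B.powersetCard (t-1), ∏ i ∈ T, lam i)
      ≤ u^2 * ∑ T ∈ B.powersetCard t, ∏ i ∈ T, lam i := by
    have hc := count_aux lam B (t-1)
    rw [Nat.sub_add_cancel ht1] at hc
    have hucast : ((t-1 : ℕ) : ℝ) + 1 = u := by
      rw [Nat.cast_sub ht1, Nat.cast_one, hu]; ring
    have hsplit : ∀ T ∈ B.powersetCard (t-1),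
        τ * ∏ i ∈ T, lam i
          = (∑ i ∈ T, lam i) * ∏ i ∈ T, lam i + (∑ i ∈ B \ T, lam i) * ∏ i ∈ T, lam i := by
      intro T hT
      rw [Finset.mem_powersetCard] at hT
      have hss := Finset.sum_sdiff (f := lam) hT.1
      rw [hτdef, ← hss]
      ring
    have h1 : τ * (∑ T ∈ B.powersetCard (t-1), ∏ i ∈ T, lam i)
        = (∑ T ∈ B.powersetCard (t-1), (∑ i ∈ T, lam i) * ∏ i ∈ T, lam i)
          + u * ∑ U ∈ B.powersetCard t, ∏ i ∈ U, lam i := by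
      rw [Finset.mul_sum, Finset.sum_congr rfl hsplit, Finset.sum_add_distrib, hc, hucast]
    have h2 : ∀ T ∈ B.powersetCard (t-1),
        (∑ i ∈ T, lam i) * ∏ i ∈ T, lam i ≤ ((u-1) * (τ/u)) * ∏ i ∈ T, lam i := by
      intro T hT
      rw [Finset.mem_powersetCard] at hT
      refine mul_le_mul_of_nonneg_right ?_ (hprodnn T)
      calc ∑ i ∈ T, lam i ≤ T.card • (τ/u) :=
            Finset.sum_le_card_nsmul T lam (τ/u) (fun i hi => hBle i (hT.1 hi))
        _ = ((t-1 : ℕ) : ℝ) * (τ/u) := by rw [hT.2, nsmul_eq_mul]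
        _ = (u-1) * (τ/u) := by rw [Nat.cast_sub ht1, Nat.cast_one, hu]
    have h3 : τ * (∑ T ∈ B.powersetCard (t-1), ∏ i ∈ T, lam i)
        ≤ (u-1) * (τ/u) * (∑ T ∈ B.powersetCard (t-1), ∏ i ∈ T, lam i)
          + u * ∑ U ∈ B.powersetCard t, ∏ i ∈ U, lam i := by
      rw [h1]
      refine add_le_add ?_ le_rfl
      calc ∑ T ∈ B.powersetCard (t-1), (∑ i ∈ T, lam i) * ∏ i ∈ T, lam i
          ≤ ∑ T ∈ B.powersetCard (t-1), ((u-1) * (τ/u)) * ∏ i ∈ T, lam i :=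
            Finset.sum_le_sum h2
        _ = (u-1) * (τ/u) * ∑ T ∈ B.powersetCard (t-1), ∏ i ∈ T, lam i := by
            rw [Finset.mul_sum]
    have h4 := mul_le_mul_of_nonneg_left h3 hu0.le
    have h5 : u * ((u-1) * (τ/u) * (∑ T ∈ B.powersetCard (t-1), ∏ i ∈ T, lam i)
        + u * ∑ U ∈ B.powersetCard t, ∏ i ∈ U, lam i)
        = (u-1) * (τ * (∑ T ∈ B.powersetCard (t-1), ∏ i ∈ T, lam i))
          + u^2 * ∑ U ∈ B.powersetCard t, ∏ i ∈ U, lam i := by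
      field_simp
    rw [h5] at h4
    nlinarith [h4]
  -- disjointness and injectivity
  have hdisj : ∀ U : Finset (Fin d), U ⊆ B → Disjoint A U := by
    intro U hU
    rw [Finset.disjoint_left]
    intro a haA haU
    rw [hA, Finset.mem_filter] at haA
    have h2 := hU haU
    rw [hB, Finset.mem_filter] at h2
    omega
  have hinj : ∀ U V : Finset (Fin d), U ⊆ B → V ⊆ B → A ∪ U = A ∪ V → U = V := by
    intro U V hU hV h
    rw [← Finset.union_sdiff_cancel_left (hdisj U hU),
      ← Finset.union_sdiff_cancel_left (hdisj V hV), h]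
  have hcardA : A.card = k := by rw [hA]; exact card_filter_lt_fin k hkd.le
  -- Step S2 : ∏_A · e_t(B) ≤ E_s
  have hS2 : (∏ i ∈ A, lam i) * (∑ U ∈ B.powersetCard t, ∏ i ∈ U, lam i)
      ≤ ∑ T ∈ (Finset.univ : Finset (Fin d)).powersetCard s, ∏ i ∈ T, lam i := by
    rw [Finset.mul_sum]
    have hval : ∀ U ∈ B.powersetCard t,
        (∏ i ∈ A, lam i) * ∏ i ∈ U, lam i = ∏ i ∈ A ∪ U, lam i := by
      intro U hU
      rw [Finset.mem_powersetCard] at hU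
      rw [Finset.prod_union (hdisj U hU.1)]
    have hsub : (B.powersetCard t).image (fun U => A ∪ U)
        ⊆ (Finset.univ : Finset (Fin d)).powersetCard s := by
      intro T hT
      rw [Finset.mem_image] at hT
      obtain ⟨U, hU, rfl⟩ := hT
      rw [Finset.mem_powersetCard] at hU ⊢
      refine ⟨Finset.subset_univ _, ?_⟩
      rw [Finset.card_union_of_disjoint (hdisj U hU.1), hcardA, hU.2]
      omega
    calc ∑ U ∈ B.powersetCard t, (∏ i ∈ A, lam i) * ∏ i ∈ U, lam i
        = ∑ U ∈ B.powersetCard t, ∏ i ∈ A ∪ U, lam i := Finset.sum_congr rfl hval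
      _ = ∑ T ∈ (B.powersetCard t).image (fun U => A ∪ U), ∏ i ∈ T, lam i :=
          (Finset.sum_image (f := fun T => ∏ i ∈ T, lam i) (g := fun U => A ∪ U)
            (fun U hU V hV h =>
            hinj U V (Finset.mem_powersetCard.mp hU).1 (Finset.mem_powersetCard.mp hV).1 h)).symm
      _ ≤ _ := Finset.sum_le_sum_of_subset_of_nonneg hsub (fun T _ _ => hprodnn T)
  -- Step S3a : for i ∈ A, E_{s-1}(λ_{-i}) ≤ (1/λ_i) E_s
  have hS3a : ∀ i ∈ A,
      (∑ T ∈ ((Finset.univ : Finset (Fin d)).erase i).powersetCard (s-1), ∏ j ∈ T, lam j)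
        ≤ (1 / lam i) * ∑ T ∈ (Finset.univ : Finset (Fin d)).powersetCard s, ∏ j ∈ T, lam j := by
    intro i hi
    have hpos := hApos i hi
    rw [div_mul_eq_mul_div, one_mul, le_div_iff₀ hpos, Finset.sum_mul]
    have hv : ∀ T ∈ ((Finset.univ : Finset (Fin d)).erase i).powersetCard (s-1),
        (∏ j ∈ T, lam j) * lam i = ∏ j ∈ insert i T, lam j := by
      intro T hT
      rw [Finset.mem_powersetCard, Finset.subset_erase] at hT
      rw [Finset.prod_insert hT.1.2, mul_comm]
    have hinj2 : ∀ T ∈ ((Finset.univ : Finset (Fin d)).erase i).powersetCard (s-1),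
        ∀ T' ∈ ((Finset.univ : Finset (Fin d)).erase i).powersetCard (s-1),
        insert i T = insert i T' → T = T' := by
      intro T hT T' hT' h
      rw [Finset.mem_powersetCard, Finset.subset_erase] at hT hT'
      rw [← Finset.erase_insert hT.1.2, ← Finset.erase_insert hT'.1.2, h]
    have hsub2 : (((Finset.univ : Finset (Fin d)).erase i).powersetCard (s-1)).image
        (fun T => insert i T) ⊆ (Finset.univ : Finset (Fin d)).powersetCard s := by
      intro T hT
      rw [Finset.mem_image] at hT
      obtain ⟨T', hT', rfl⟩ := hT
      rw [Finset.mem_powersetCard, Finset.subset_erase] at hT'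
      rw [Finset.mem_powersetCard]
      refine ⟨Finset.subset_univ _, ?_⟩
      rw [Finset.card_insert_of_notMem hT'.1.2, hT'.2]
      omega
    calc ∑ T ∈ ((Finset.univ : Finset (Fin d)).erase i).powersetCard (s-1),
          (∏ j ∈ T, lam j) * lam i
        = ∑ T ∈ ((Finset.univ : Finset (Fin d)).erase i).powersetCard (s-1),
            ∏ j ∈ insert i T, lam j := Finset.sum_congr rfl hv
      _ = ∑ T ∈ (((Finset.univ : Finset (Fin d)).erase i).powersetCard (s-1)).image
            (fun T => insert i T), ∏ j ∈ T, lam j :=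
          (Finset.sum_image (f := fun T => ∏ j ∈ T, lam j) (g := fun T => insert i T) hinj2).symm
      _ ≤ _ := Finset.sum_le_sum_of_subset_of_nonneg hsub2 (fun T _ _ => hprodnn T)
  -- Step S3b
  have hps : ∀ i : Fin d, ((Finset.univ : Finset (Fin d)).erase i).powersetCard (s-1)
      = ((Finset.univ : Finset (Fin d)).powersetCard (s-1)).filter (fun T => i ∉ T) := by
    intro i
    ext T
    simp only [Finset.mem_powersetCard, Finset.mem_filter, Finset.subset_erase]
    tauto
  have hS3b : ∑ i ∈ A,
      ∑ T ∈ ((Finset.univ : Finset (Fin d)).erase i).powersetCard (s-1), ∏ j ∈ T, lam j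
      = ∑ T ∈ (Finset.univ : Finset (Fin d)).powersetCard (s-1),
          ((A.filter (fun i => i ∉ T)).card : ℝ) * ∏ j ∈ T, lam j := by
    rw [Finset.sum_congr rfl (fun i _ => by rw [hps i, Finset.sum_filter]), Finset.sum_comm]
    refine Finset.sum_congr rfl fun T _ => ?_
    rw [← Finset.sum_filter, Finset.sum_const, nsmul_eq_mul]
  -- Step S3c
  have himgc : Finset.image (fun U => A ∪ U) (B.powersetCard (t-1))
      = ((Finset.univ : Finset (Fin d)).powersetCard (s-1)).filter (fun T => A ⊆ T) := by
    ext T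
    simp only [Finset.mem_image, Finset.mem_filter]
    constructor
    · rintro ⟨U, hU, rfl⟩
      rw [Finset.mem_powersetCard] at hU
      rw [Finset.mem_powersetCard]
      refine ⟨⟨Finset.subset_univ _, ?_⟩, Finset.subset_union_left⟩
      rw [Finset.card_union_of_disjoint (hdisj U hU.1), hcardA, hU.2]
      omega
    · rintro ⟨hT, hAT⟩
      rw [Finset.mem_powersetCard] at hT
      refine ⟨T \ A, ?_, ?_⟩
      · rw [Finset.mem_powersetCard]
        constructor
        · intro a ha
          rw [Finset.mem_sdiff] at ha
          have h1 : a ∉ A := ha.2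
          rw [hA] at h1
          simp only [Finset.mem_filter, Finset.mem_univ, true_and] at h1
          rw [hB, Finset.mem_filter]
          exact ⟨Finset.mem_univ _, by omega⟩
        · rw [Finset.card_sdiff_of_subset hAT, hT.2, hcardA]
          omega
      · rw [Finset.union_comm, Finset.sdiff_union_of_subset hAT]
  have hS3c : ∑ T ∈ ((Finset.univ : Finset (Fin d)).powersetCard (s-1)).filter (fun T => A ⊆ T),
        ∏ j ∈ T, lam j
      = (∏ i ∈ A, lam i) * ∑ U ∈ B.powersetCard (t-1), ∏ i ∈ U, lam i := by
    calc ∑ T ∈ ((Finset.univ : Finset (Fin d)).powersetCard (s-1)).filter (fun T => A ⊆ T),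
          ∏ j ∈ T, lam j
        = ∑ T ∈ (B.powersetCard (t-1)).image (fun U => A ∪ U), ∏ j ∈ T, lam j := by
          rw [himgc]
      _ = ∑ U ∈ B.powersetCard (t-1), ∏ j ∈ A ∪ U, lam j :=
          Finset.sum_image (f := fun T => ∏ j ∈ T, lam j) (g := fun U => A ∪ U)
            (fun U hU V hV h =>
            hinj U V (Finset.mem_powersetCard.mp hU).1 (Finset.mem_powersetCard.mp hV).1 h)
      _ = ∑ U ∈ B.powersetCard (t-1), (∏ i ∈ A, lam i) * ∏ i ∈ U, lam i :=
          Finset.sum_congr rfl (fun U hU =>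
            Finset.prod_union (hdisj U (Finset.mem_powersetCard.mp hU).1))
      _ = (∏ i ∈ A, lam i) * ∑ U ∈ B.powersetCard (t-1), ∏ i ∈ U, lam i := by
          rw [Finset.mul_sum]
  -- termwise bound
  have hterm : ∀ T ∈ (Finset.univ : Finset (Fin d)).powersetCard (s-1),
      ∏ j ∈ T, lam j ≤ ((A.filter (fun i => i ∉ T)).card : ℝ) * ∏ j ∈ T, lam j
        + (if A ⊆ T then ∏ j ∈ T, lam j else 0) := by
    intro T _
    by_cases hAT : A ⊆ T
    · simp only [hAT, if_true]
      have h0 : (0:ℝ) ≤ ((A.filter (fun i => i ∉ T)).card : ℝ) * ∏ j ∈ T, lam j :=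
        mul_nonneg (Nat.cast_nonneg _) (hprodnn T)
      linarith
    · simp only [hAT, if_false, add_zero]
      have h1 : 1 ≤ (A.filter (fun i => i ∉ T)).card := by
        rw [Nat.one_le_iff_ne_zero, ← Nat.pos_iff_ne_zero, Finset.card_pos]
        obtain ⟨a, haA, haT⟩ := Finset.not_subset.mp hAT
        exact ⟨a, Finset.mem_filter.mpr ⟨haA, haT⟩⟩
      have h1' : (1:ℝ) ≤ ((A.filter (fun i => i ∉ T)).card : ℝ) := by exact_mod_cast h1
      exact le_mul_of_one_le_left (hprodnn T) h1'
  have hmain1 : ∑ T ∈ (Finset.univ : Finset (Fin d)).powersetCard (s-1), ∏ j ∈ T, lam j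
      ≤ (∑ T ∈ (Finset.univ : Finset (Fin d)).powersetCard (s-1),
          ((A.filter (fun i => i ∉ T)).card : ℝ) * ∏ j ∈ T, lam j)
        + ∑ T ∈ ((Finset.univ : Finset (Fin d)).powersetCard (s-1)).filter (fun T => A ⊆ T),
            ∏ j ∈ T, lam j := by
    calc ∑ T ∈ (Finset.univ : Finset (Fin d)).powersetCard (s-1), ∏ j ∈ T, lam j
        ≤ ∑ T ∈ (Finset.univ : Finset (Fin d)).powersetCard (s-1),
            (((A.filter (fun i => i ∉ T)).card : ℝ) * ∏ j ∈ T, lam j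
              + (if A ⊆ T then ∏ j ∈ T, lam j else 0)) := Finset.sum_le_sum hterm
      _ = _ := by rw [Finset.sum_add_distrib, ← Finset.sum_filter]
  -- assemble
  have hS1' : (∑ T ∈ B.powersetCard (t-1), ∏ i ∈ T, lam i)
      ≤ u^2/τ * ∑ T ∈ B.powersetCard t, ∏ i ∈ T, lam i := by
    rw [div_mul_eq_mul_div, le_div_iff₀ hτpos, mul_comm]
    exact hS1
  have hstep2 : (∏ i ∈ A, lam i) * (∑ U ∈ B.powersetCard (t-1), ∏ i ∈ U, lam i)
      ≤ u^2/τ * ∑ T ∈ (Finset.univ : Finset (Fin d)).powersetCard s, ∏ i ∈ T, lam i := by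
    calc (∏ i ∈ A, lam i) * (∑ U ∈ B.powersetCard (t-1), ∏ i ∈ U, lam i)
        ≤ (∏ i ∈ A, lam i) * (u^2/τ * ∑ T ∈ B.powersetCard t, ∏ i ∈ T, lam i) :=
          mul_le_mul_of_nonneg_left hS1' (Finset.prod_nonneg fun i _ => hnn i)
      _ = u^2/τ * ((∏ i ∈ A, lam i) * ∑ T ∈ B.powersetCard t, ∏ i ∈ T, lam i) := by ring
      _ ≤ u^2/τ * ∑ T ∈ (Finset.univ : Finset (Fin d)).powersetCard s, ∏ i ∈ T, lam i :=
          mul_le_mul_of_nonneg_left hS2 (div_nonneg (sq_nonneg u) hτpos.le)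
  have hstep1 : ∑ i ∈ A,
      ∑ T ∈ ((Finset.univ : Finset (Fin d)).erase i).powersetCard (s-1), ∏ j ∈ T, lam j
      ≤ (∑ i ∈ A, 1 / lam i)
        * ∑ T ∈ (Finset.univ : Finset (Fin d)).powersetCard s, ∏ j ∈ T, lam j := by
    rw [Finset.sum_mul]
    exact Finset.sum_le_sum hS3a
  have hmain : ∑ T ∈ (Finset.univ : Finset (Fin d)).powersetCard (s-1), ∏ i ∈ T, lam i
      ≤ ((∑ i ∈ A, 1 / lam i) + u^2/τ)
        * ∑ T ∈ (Finset.univ : Finset (Fin d)).powersetCard s, ∏ i ∈ T, lam i := by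
    calc ∑ T ∈ (Finset.univ : Finset (Fin d)).powersetCard (s-1), ∏ i ∈ T, lam i
        ≤ (∑ T ∈ (Finset.univ : Finset (Fin d)).powersetCard (s-1),
            ((A.filter (fun i => i ∉ T)).card : ℝ) * ∏ j ∈ T, lam j)
          + ∑ T ∈ ((Finset.univ : Finset (Fin d)).powersetCard (s-1)).filter (fun T => A ⊆ T),
              ∏ j ∈ T, lam j := hmain1
      _ = (∑ i ∈ A,
            ∑ T ∈ ((Finset.univ : Finset (Fin d)).erase i).powersetCard (s-1), ∏ j ∈ T, lam j)
          + (∏ i ∈ A, lam i) * ∑ U ∈ B.powersetCard (t-1), ∏ i ∈ U, lam i := by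
            rw [← hS3b, hS3c]
      _ ≤ (∑ i ∈ A, 1 / lam i)
            * (∑ T ∈ (Finset.univ : Finset (Fin d)).powersetCard s, ∏ j ∈ T, lam j)
          + u^2/τ * ∑ T ∈ (Finset.univ : Finset (Fin d)).powersetCard s, ∏ i ∈ T, lam i :=
            add_le_add hstep1 hstep2
      _ = _ := by ring
  rw [div_le_iff₀ hEs, htail, hcast]
  exact hmain
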